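/- Let K = ℤ/2 × ℤ/2, identify K̂ with K via the pairing ⟨x,y⟩ = (−1)^{x₁y₁ + x₂y₂}, and use the symmetric bicharacter c(x,y) = (−1)^{x₁y₁ + x₂y₂}. Let ζ₈ = e^{iπ/4}. For any integers m, n and c' ∈ {0,1}, define λ(x,y) = (m x₁y₁ mod 2, n x₂y₂ mod 2) ∈ K, ω(x,y,z) = ζ₈^{2(m x₁y₁z₁ + n x₂y₂z₂)}, and t(x,y) = ζ₈^{m x₁y₁ + n x₂y₂}·(−1)^{c' x₁y₂}, with coordinates represented in {0,1}. Then (λ, ω, t) is a braided zesting datum: λ is a symmetric 2-cocycle in Z²(K,K), d³(ω) = λ ∧_c λ, and the equations (BZ2) and (BZ3) hold. -/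
import Mathlib


/-!
Statement 15: explicit braided zesting data for the pre-metric group of the
pointed part of `SO(2n)_k` (`n ≡ 2 mod 4`, `k` even): for integers `m, n` and
`c' ∈ {0,1}`, the triple `(λ, ω, t)` built from `ζ₈ = e^{iπ/4}` is a braided
zesting datum for the Klein four-group with `c(x,y) = (−1)^{x₁y₁+x₂y₂}`,
identifying `K̂` with `K` via `⟨x,y⟩ = (−1)^{x₁y₁+x₂y₂}`.
-/

namespace Zesting

/-- The Klein four-group. -/
abbrev K := ZMod 2 × ZMod 2

/-- `ζ₈ = e^{iπ/4}`, a primitive eighth root of unity. -/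
noncomputable def z8 : ℂˣ :=
  Units.mk0 (Complex.exp (Real.pi * Complex.I / 4)) (Complex.exp_ne_zero _)

/-- The symmetric bicharacter (and pairing) `(x,y) ↦ (−1)^{x₁y₁ + x₂y₂}`. -/
noncomputable def cK (x y : K) : ℂˣ :=
  (-1 : ℂˣ) ^ (x.1.val * y.1.val + x.2.val * y.2.val)

/-- `λ(x,y) = (m x₁y₁ mod 2, n x₂y₂ mod 2)`. -/
def lam15 (m n : ℤ) : K → K → K := fun x y =>
  (((m * x.1.val * y.1.val : ℤ) : ZMod 2), ((n * x.2.val * y.2.val : ℤ) : ZMod 2))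

/-- `ω(x,y,z) = ζ₈^{2(m x₁y₁z₁ + n x₂y₂z₂)}`. -/
noncomputable def w15 (m n : ℤ) : K → K → K → ℂˣ := fun x y z =>
  z8 ^ (2 * (m * x.1.val * y.1.val * z.1.val + n * x.2.val * y.2.val * z.2.val))

/-- `t(x,y) = ζ₈^{m x₁y₁ + n x₂y₂}·(−1)^{c' x₁y₂}`. -/
noncomputable def t15 (m n c' : ℤ) : K → K → ℂˣ := fun x y =>
  z8 ^ (m * x.1.val * y.1.val + n * x.2.val * y.2.val) *
    (-1 : ℂˣ) ^ (c' * x.1.val * y.2.val)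


/-! ### Auxiliary lemmas -/

lemma z8_eight : z8 ^ (8:ℤ) = 1 := by
  ext
  push_cast [z8, Units.val_mk0]
  rw [← Complex.exp_int_mul]
  rw [show (8:ℤ) * (Real.pi * Complex.I / 4) = 2 * Real.pi * Complex.I by push_cast; ring]
  exact Complex.exp_two_pi_mul_I

lemma z8_zpow_eq {a b : ℤ} (h : (8:ℤ) ∣ (a - b)) : z8 ^ a = z8 ^ b := by
  obtain ⟨k, hk⟩ := h
  have ha : a = b + 8 * k := by omega
  rw [ha, zpow_add, zpow_mul, z8_eight, one_zpow, mul_one]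

lemma neg_one_eq_z8 : (-1 : ℂˣ) = z8 ^ (4:ℤ) := by
  ext
  push_cast [z8, Units.val_mk0]
  rw [← Complex.exp_int_mul]
  rw [show (4:ℤ) * (Real.pi * Complex.I / 4) = Real.pi * Complex.I by push_cast; ring]
  exact (Complex.exp_pi_mul_I).symm

lemma neg_one_npow (k : ℕ) : ((-1:ℂˣ)) ^ k = z8 ^ (4 * (k:ℤ)) := by
  rw [neg_one_eq_z8, ← zpow_natCast, ← zpow_mul]

lemma neg_one_zpow' (k : ℤ) : ((-1:ℂˣ)) ^ k = z8 ^ (4 * k) := by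
  rw [neg_one_eq_z8, ← zpow_mul]

lemma z8_mul_pow (a b : ℤ) : z8 ^ a * z8 ^ b = z8 ^ (a + b) := (zpow_add z8 a b).symm
lemma z8_div_pow (a b : ℤ) : z8 ^ a / z8 ^ b = z8 ^ (a - b) := (zpow_sub z8 a b).symm
lemma z8_inv_pow (a : ℤ) : (z8 ^ a)⁻¹ = z8 ^ (-a) := (zpow_neg z8 a).symm

lemma val_lt2 (a : ZMod 2) : a.val = 0 ∨ a.val = 1 := by
  have := ZMod.val_lt a; omega

lemma aux3 (m a b c d : ℤ) (ha : a = 0 ∨ a = 1) (hb : b = 0 ∨ b = 1)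
    (hc : c = 0 ∨ c = 1) (hd : d = 0 ∨ d = 1) :
    (8:ℤ) ∣ (2*(m*b*c*d) - 2*(m*((a+b)%2)*c*d) + 2*(m*a*((b+c)%2)*d)
      - 2*(m*a*b*((c+d)%2)) + 2*(m*a*b*c) - 4*((m*a*b)%2 * ((m*c*d)%2))) := by
  rcases Int.emod_two_eq m with hm|hm <;>
  rcases ha with rfl|rfl <;> rcases hb with rfl|rfl <;>
  rcases hc with rfl|rfl <;> rcases hd with rfl|rfl <;>
  simp only [mul_zero, mul_one, zero_mul, one_mul, hm] <;> omega

set_option maxHeartbeats 1000000 in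
/-- `(λ, ω, t)` is a braided zesting datum: `λ` is a
symmetric 2-cocycle, `d³(ω) = λ ∧_c λ`, and (BZ2) and (BZ3) hold. -/
theorem statement15 (m n c' : ℤ) (hc' : c' = 0 ∨ c' = 1) :
    (∀ x y, lam15 m n x y = lam15 m n y x) ∧
    (∀ x y z,
      lam15 m n y z - lam15 m n (x + y) z + lam15 m n x (y + z) - lam15 m n x y = 0) ∧
    (∀ x y z w,
      w15 m n y z w * (w15 m n (x + y) z w)⁻¹ * w15 m n x (y + z) w *
          (w15 m n x y (z + w))⁻¹ * w15 m n x y z =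
        cK (lam15 m n x y) (lam15 m n z w)) ∧
    (∀ x y z,
      w15 m n x y z * w15 m n y z x / w15 m n y x z =
        t15 m n c' x y * t15 m n c' x z / t15 m n c' x (y + z)) ∧
    (∀ x y z,
      cK z (lam15 m n x y) =
        (w15 m n x y z * w15 m n z x y / w15 m n x z y) *
          (t15 m n c' x z * t15 m n c' y z / t15 m n c' (x + y) z)) := by
  refine ⟨?_, ?_, ?_, ?_, ?_⟩
  · -- symmetry of λ
    intro x y
    simp only [lam15, Prod.mk.injEq]
    constructor <;> · congr 1; ring
  · -- λ is a 2-cocycle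
    intro x y z
    simp only [lam15]
    apply Prod.ext <;>
      simp only [Prod.fst_add, Prod.snd_add, Prod.fst_sub, Prod.snd_sub, Prod.fst_zero,
        Prod.snd_zero] <;>
      push_cast [ZMod.natCast_val] <;> ring
  · -- d³(ω) = λ ∧_c λ
    intro x y z w
    simp only [w15, cK, lam15, neg_one_npow, z8_mul_pow, z8_inv_pow,
      Prod.fst_add, Prod.snd_add, ZMod.val_add]
    apply z8_zpow_eq
    simp only [Nat.cast_add, Nat.cast_mul, Int.natCast_mod, Nat.cast_ofNat,
      ZMod.val_intCast]
    have vb : ∀ a : ZMod 2, (a.val : ℤ) = 0 ∨ (a.val : ℤ) = 1 := by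
      intro a; have := ZMod.val_lt a; omega
    obtain ⟨k1, hk1⟩ :=
      aux3 m x.1.val y.1.val z.1.val w.1.val (vb x.1) (vb y.1) (vb z.1) (vb w.1)
    obtain ⟨k2, hk2⟩ :=
      aux3 n x.2.val y.2.val z.2.val w.2.val (vb x.2) (vb y.2) (vb z.2) (vb w.2)
    exact ⟨k1 + k2, by linear_combination hk1 + hk2⟩
  · -- (BZ2)
    intro x y z
    simp only [w15, t15, neg_one_zpow', z8_mul_pow, z8_div_pow, z8_inv_pow,
      Prod.fst_add, Prod.snd_add, ZMod.val_add]
    apply z8_zpow_eq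
    push_cast [ZMod.val_intCast]
    rcases val_lt2 x.1 with h1|h1 <;> rcases val_lt2 x.2 with h2|h2 <;>
    rcases val_lt2 y.1 with h3|h3 <;> rcases val_lt2 y.2 with h4|h4 <;>
    rcases val_lt2 z.1 with h5|h5 <;> rcases val_lt2 z.2 with h6|h6 <;>
    simp only [h1, h2, h3, h4, h5, h6, Nat.cast_zero, Nat.cast_one, mul_zero, mul_one,
      zero_mul, one_mul] <;> omega
  · -- (BZ3)
    intro x y z
    simp only [w15, t15, cK, lam15, neg_one_zpow', neg_one_npow, z8_mul_pow, z8_div_pow,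
      z8_inv_pow, Prod.fst_add, Prod.snd_add, ZMod.val_add]
    apply z8_zpow_eq
    simp only [Nat.cast_add, Nat.cast_mul, Int.natCast_mod, Nat.cast_ofNat,
      ZMod.val_intCast]
    rcases Int.emod_two_eq m with hm|hm <;> rcases Int.emod_two_eq n with hn|hn <;>
    rcases val_lt2 x.1 with h1|h1 <;> rcases val_lt2 x.2 with h2|h2 <;>
    rcases val_lt2 y.1 with h3|h3 <;> rcases val_lt2 y.2 with h4|h4 <;>
    rcases val_lt2 z.1 with h5|h5 <;> rcases val_lt2 z.2 with h6|h6 <;>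
    simp only [h1, h2, h3, h4, h5, h6, Nat.cast_zero, Nat.cast_one, mul_zero, mul_one,
      zero_mul, one_mul, hm, hn] <;> omega

end Zesting
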